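/- arXiv:2003.09471 — 3 statements merged into one kernel-verified Lean document; each statement's English description precedes it below -/
import Mathlib

section
/- For all real numbers λ₁ > 0, λ₂ > 0, t > 0 and every integer j ≥ 0, the limit as n → ∞ of the sum Σ_{m=0}^{⌊(n−j)/2⌋} [n! / (m! (m+j)! (n−2m−j)!)] · (λ₁t/n)^{m+j} · (λ₂t/n)^{m} · (1 − (λ₁+λ₂)t/n)^{n−2m−j} exists and equals e^{−(λ₁+λ₂)t} · Σ_{m=0}^{∞} (λ₁t)^{m+j} (λ₂t)^{m} / (m! (m+j)!). -/
open Filter Topology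

private lemma skellam_aux_descFactorial (K : ℕ) :
    Tendsto (fun n : ℕ => (n.descFactorial K : ℝ) / (n : ℝ) ^ K) atTop (𝓝 1) := by
  have h : Tendsto (fun n : ℕ => ∏ i ∈ Finset.range K, (1 - (i : ℝ) / n)) atTop (𝓝 1) := by
    rw [show (1:ℝ) = ∏ _i ∈ Finset.range K, (1:ℝ) by simp]
    refine tendsto_finset_prod _ fun i _ => ?_
    simpa using tendsto_const_nhds.sub (tendsto_const_div_atTop_nhds_zero_nat (i : ℝ))
  refine h.congr' ?_
  filter_upwards [eventually_ge_atTop (max K 1)] with n hn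
  have hK : K ≤ n := le_trans (le_max_left _ _) hn
  have hn1 : (1:ℕ) ≤ n := le_trans (le_max_right _ _) hn
  have hn0 : (n:ℝ) ≠ 0 := by
    exact_mod_cast Nat.one_le_iff_ne_zero.mp hn1
  rw [Nat.descFactorial_eq_prod_range, Nat.cast_prod,
    show ((n:ℝ))^K = ∏ _i ∈ Finset.range K, (n:ℝ) by simp, ← Finset.prod_div_distrib]
  refine Finset.prod_congr rfl fun i hi => ?_
  have hiK : i ≤ n := le_of_lt (lt_of_lt_of_le (Finset.mem_range.mp hi) hK)
  rw [Nat.cast_sub hiK]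
  field_simp

private lemma skellam_aux_exp (x : ℝ) (K : ℕ) :
    Tendsto (fun n : ℕ => (1 + x / n) ^ (n - K)) atTop (𝓝 (Real.exp x)) := by
  have h1 := Real.tendsto_one_add_div_pow_exp x
  have hbase : Tendsto (fun n : ℕ => 1 + x / n) atTop (𝓝 1) := by
    simpa using tendsto_const_nhds.add (tendsto_const_div_atTop_nhds_zero_nat x)
  have h2 : Tendsto (fun n : ℕ => (1 + x / n) ^ K) atTop (𝓝 1) := by
    simpa using hbase.pow K
  have h3 : Tendsto (fun n : ℕ => (1 + x/n)^n / (1 + x/n)^K) atTop (𝓝 (Real.exp x)) := by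
    simpa [Pi.div_def] using h1.div h2 one_ne_zero
  refine h3.congr' ?_
  filter_upwards [eventually_ge_atTop K, eventually_gt_atTop ⌈|x|⌉₊] with n hK hx
  have hn0 : (0:ℝ) < n := by
    have : 0 < n := lt_of_le_of_lt (Nat.zero_le _) hx
    exact_mod_cast this
  have habs : |x| < (n:ℝ) := lt_of_le_of_lt (Nat.le_ceil _) (by exact_mod_cast hx)
  have hxn : -(n:ℝ) < x := by
    have := abs_lt.mp habs
    linarith [this.1]
  have hne : (1 : ℝ) + x / n ≠ 0 := by
    have : -1 < x / n := by
      rw [lt_div_iff₀ hn0]; linarith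
    linarith
  exact (pow_sub₀ _ hne hK).symm

/-- The trinomial approximation of the Skellam distribution converges to
the Skellam probability mass function. -/
theorem skellam_trinomial_limit (lam1 lam2 t : ℝ) (hlam1 : 0 < lam1) (hlam2 : 0 < lam2)
    (ht : 0 < t) (j : ℕ) :
    Tendsto (fun n : ℕ =>
        ∑ m ∈ Finset.range ((n - j) / 2 + 1),
          ((Nat.factorial n : ℝ) /
              ((Nat.factorial m : ℝ) * (Nat.factorial (m + j) : ℝ) *
                (Nat.factorial (n - 2 * m - j) : ℝ))) *
            (lam1 * t / n) ^ (m + j) * (lam2 * t / n) ^ m *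
            (1 - (lam1 + lam2) * t / n) ^ (n - 2 * m - j))
      atTop
      (nhds (Real.exp (-(lam1 + lam2) * t) *
        ∑' m : ℕ, (lam1 * t) ^ (m + j) * (lam2 * t) ^ m /
          ((Nat.factorial m : ℝ) * (Nat.factorial (m + j) : ℝ)))) := by
  set x : ℝ := (lam1 + lam2) * t with hxdef
  have hx0 : 0 < x := by positivity
  set a : ℕ → ℝ := fun m => (lam1 * t) ^ (m + j) * (lam2 * t) ^ m /
      ((Nat.factorial m : ℝ) * (Nat.factorial (m + j) : ℝ)) with ha
  have ha_pos : ∀ m, 0 < a m := fun m => by positivity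
  have ha_sum : Summable a := by
    refine Summable.of_nonneg_of_le (fun m => (ha_pos m).le)
      (f := fun m => (lam1*t)^j * ((lam1*t*(lam2*t))^m / (Nat.factorial m : ℝ))) ?_ ?_
    · intro m
      have h1 : (1:ℝ) ≤ ((m+j).factorial : ℝ) := by exact_mod_cast (m+j).factorial_pos
      have key : a m = ((lam1*t)^j * ((lam1*t*(lam2*t))^m / (Nat.factorial m : ℝ))) /
          ((m+j).factorial : ℝ) := by
        simp only [ha]
        rw [pow_add, mul_pow]
        ring
      rw [key]
      exact div_le_self (by positivity) h1
    · exact (Real.summable_pow_div_factorial _).mul_left _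
  set f : ℕ → ℕ → ℝ := fun n m =>
      if 2 * m + j ≤ n then
        ((n.descFactorial (2*m+j) : ℝ) / (n:ℝ) ^ (2*m+j)) * a m * (1 - x / n) ^ (n - (2*m+j))
      else 0 with hf
  have hterm : ∀ n m : ℕ, 2*m+j ≤ n → 1 ≤ n →
      ((Nat.factorial n : ℝ) /
          ((Nat.factorial m : ℝ) * (Nat.factorial (m + j) : ℝ) *
            (Nat.factorial (n - 2 * m - j) : ℝ))) *
        (lam1 * t / n) ^ (m + j) * (lam2 * t / n) ^ m * (1 - x / n) ^ (n - 2 * m - j)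
      = ((n.descFactorial (2*m+j) : ℝ) / (n:ℝ) ^ (2*m+j)) * a m * (1 - x/n) ^ (n - (2*m+j)) := by
    intro n m hK hn
    have hsub : n - 2*m - j = n - (2*m+j) := by omega
    have hfac : (Nat.factorial n : ℝ) =
        ((n - (2*m+j)).factorial : ℝ) * (n.descFactorial (2*m+j) : ℝ) := by
      exact_mod_cast (Nat.factorial_mul_descFactorial hK).symm
    have hn0 : (n:ℝ) ≠ 0 := by
      exact_mod_cast Nat.one_le_iff_ne_zero.mp hn
    have hm0 : (Nat.factorial m : ℝ) ≠ 0 := by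
      exact_mod_cast m.factorial_ne_zero
    have hmj0 : ((m+j).factorial : ℝ) ≠ 0 := by
      exact_mod_cast (m+j).factorial_ne_zero
    have hnk0 : ((n - (2*m+j)).factorial : ℝ) ≠ 0 := by
      exact_mod_cast (n - (2*m+j)).factorial_ne_zero
    have hpow : (n:ℝ) ^ (2*m+j) = (n:ℝ)^(m+j) * (n:ℝ)^m := by
      rw [← pow_add]
      congr 1
      omega
    rw [hsub, hfac, hpow]
    simp only [ha]
    generalize (1 - x / (n:ℝ)) ^ (n - (2*m+j)) = P
    field_simp
    simp only [div_pow]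
    field_simp
  have key : Tendsto (fun n => ∑' m, f n m) atTop (𝓝 (∑' m, Real.exp (-x) * a m)) := by
    refine tendsto_tsum_of_dominated_convergence ha_sum ?_ ?_
    · intro m
      have h1 := skellam_aux_descFactorial (2*m+j)
      have h2 := skellam_aux_exp (-x) (2*m+j)
      have h3 := (h1.mul_const (a m)).mul h2
      rw [one_mul] at h3
      have h4 : Tendsto (fun n : ℕ =>
          ((n.descFactorial (2*m+j) : ℝ) / (n:ℝ) ^ (2*m+j)) * a m * (1 + (-x) / n) ^ (n - (2*m+j)))
          atTop (𝓝 (Real.exp (-x) * a m)) := by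
        simpa [mul_comm] using h3
      refine h4.congr' ?_
      filter_upwards [eventually_ge_atTop (2*m+j)] with n hn
      simp only [hf, if_pos hn, neg_div, ← sub_eq_add_neg]
    · filter_upwards [eventually_ge_atTop ⌈x⌉₊, eventually_ge_atTop 1] with n hn hn1
      intro m
      simp only [hf]
      split_ifs with hK
      · have hn0 : (0:ℝ) < n := by
          have : (0:ℕ) < n := hn1
          exact_mod_cast this
        have hx1 : x / n ≤ 1 := by
          rw [div_le_one hn0]
          calc x ≤ (⌈x⌉₊ : ℝ) := Nat.le_ceil x
            _ ≤ n := by exact_mod_cast hn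
        have h01 : (0:ℝ) ≤ 1 - x/n := by linarith
        have h11 : 1 - x/n ≤ 1 := by
          have : 0 ≤ x / n := div_nonneg hx0.le hn0.le
          linarith
        have hd0 : (0:ℝ) ≤ (n.descFactorial (2*m+j) : ℝ) / (n:ℝ)^(2*m+j) := by positivity
        have hd : (n.descFactorial (2*m+j) : ℝ) / (n:ℝ)^(2*m+j) ≤ 1 := by
          rw [div_le_one (by positivity)]
          exact_mod_cast Nat.descFactorial_le_pow n (2*m+j)
        have hp0 : (0:ℝ) ≤ (1 - x/n) ^ (n - (2*m+j)) := pow_nonneg h01 _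
        have hp1 : (1 - x/n) ^ (n - (2*m+j)) ≤ 1 := pow_le_one₀ h01 h11
        have habs : (0:ℝ) ≤ ((n.descFactorial (2*m+j) : ℝ) / (n:ℝ)^(2*m+j)) * a m *
            (1 - x/n) ^ (n - (2*m+j)) :=
          mul_nonneg (mul_nonneg hd0 (ha_pos m).le) hp0
        rw [Real.norm_eq_abs, abs_of_nonneg habs]
        calc ((n.descFactorial (2*m+j) : ℝ) / (n:ℝ)^(2*m+j)) * a m * (1 - x/n) ^ (n - (2*m+j))
            ≤ 1 * a m * 1 := by
              gcongr
          _ = a m := by ring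
      · simpa using (ha_pos m).le
  have hval : (∑' m, Real.exp (-x) * a m) = Real.exp (-(lam1 + lam2) * t) * ∑' m, a m := by
    rw [tsum_mul_left, hxdef, neg_mul]
  rw [hval] at key
  refine key.congr' ?_
  filter_upwards [eventually_ge_atTop (max j 1)] with n hn
  have hj : j ≤ n := le_trans (le_max_left _ _) hn
  have hn1 : 1 ≤ n := le_trans (le_max_right _ _) hn
  rw [tsum_eq_sum (s := Finset.range ((n - j)/2 + 1)) ?_]
  · refine Finset.sum_congr rfl fun m hm => ?_
    have hmr : m ≤ (n - j)/2 := Nat.lt_succ_iff.mp (Finset.mem_range.mp hm)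
    have hK : 2*m+j ≤ n := by omega
    simp only [hf, if_pos hK]
    exact (hterm n m hK hn1).symm
  · intro m hm
    simp only [hf]
    rw [if_neg]
    intro hK
    exact hm (Finset.mem_range.mpr (by omega))
end

section
/- Let α ∈ (0,1), μ > 0, λ > 0 with 2λ < μ, and θ ∈ ℝ. Then the iterated series Σ_{n=1}^{∞} μ^{α−n} binom(α,n) λ^{n} Σ_{l=1}^{n} C(n,l) (−1)^{l+1} (e^{iθl} − 1) converges and equals −( (μ + λ(1 − e^{iθ}))^{α} − μ^{α} ), where the complex power is the principal branch and C(n,l) is the ordinary binomial coefficient. -/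
/-- Generalized binomial coefficient `binom(α, n) = (∏_{j=0}^{n-1} (α - j)) / n!`. -/
noncomputable def genBinom (α : ℝ) (n : ℕ) : ℝ :=
  (∏ j ∈ Finset.range n, (α - j)) / (Nat.factorial n : ℝ)

lemma genBinom_zero (α : ℝ) : genBinom α 0 = 1 := by simp [genBinom]

lemma genBinom_succ (α : ℝ) (n : ℕ) :
    genBinom α (n + 1) * (n + 1) = genBinom α n * (α - n) := by
  have hf : (Nat.factorial n : ℝ) ≠ 0 := Nat.cast_ne_zero.mpr n.factorial_ne_zero
  have hn1 : ((n : ℝ) + 1) ≠ 0 := by positivity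
  unfold genBinom
  rw [Finset.prod_range_succ, Nat.factorial_succ]
  push_cast
  field_simp

lemma abs_genBinom_le (α : ℝ) (hα0 : 0 ≤ α) (hα1 : α ≤ 1) (n : ℕ) : |genBinom α n| ≤ 1 := by
  induction n with
  | zero => simp [genBinom_zero]
  | succ n ih =>
    have hn1 : (0:ℝ) < (n : ℝ) + 1 := by positivity
    have h : genBinom α (n + 1) = genBinom α n * (α - n) / ((n : ℝ) + 1) := by
      field_simp
      linarith [genBinom_succ α n]
    rw [h, abs_div, abs_mul, abs_of_pos hn1]
    have habs : |α - (n:ℝ)| ≤ (n:ℝ) + 1 := by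
      rw [abs_le]
      constructor <;> [skip; skip] <;> nlinarith [Nat.cast_nonneg (α := ℝ) n]
    have hle : |genBinom α n| * |α - (n:ℝ)| ≤ 1 * ((n:ℝ)+1) :=
      mul_le_mul ih habs (abs_nonneg _) zero_le_one
    rw [div_le_one hn1]
    linarith

lemma hasSum_genBinom (α : ℝ) (hα0 : 0 ≤ α) (hα1 : α ≤ 1) {z : ℂ} (hz : ‖z‖ < 1) :
    HasSum (fun n : ℕ => ((genBinom α n : ℝ) : ℂ) * z ^ n) ((1 + z) ^ (α : ℂ)) := by
  set r : ℝ := (‖z‖ + 1) / 2 with hrdef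
  have hr0 : 0 < r := by positivity
  have hr1 : r < 1 := by simp only [hrdef]; linarith
  have hzr : ‖z‖ < r := by simp only [hrdef]; linarith
  set t : Set ℂ := Metric.ball (0 : ℂ) r with htdef
  have hto : IsOpen t := Metric.isOpen_ball
  have htc : IsPreconnected t := (convex_ball (0:ℂ) r).isPreconnected
  have h0t : (0 : ℂ) ∈ t := Metric.mem_ball_self hr0
  have hzt : z ∈ t := by simpa [htdef, Metric.mem_ball] using hzr
  have hmemnorm : ∀ w ∈ t, ‖w‖ < r := fun w hw => by
    simpa [htdef, Metric.mem_ball] using hw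
  set c : ℕ → ℂ := fun n => ((genBinom α n : ℝ) : ℂ) with hcdef
  set g : ℕ → ℂ → ℂ := fun n w => c n * w ^ n with hgdef
  set g' : ℕ → ℂ → ℂ := fun n w => c n * (n * w ^ (n - 1)) with hg'def
  set u : ℕ → ℝ := fun n => n * r ^ (n - 1) with hudef
  have hcle : ∀ n, ‖c n‖ ≤ 1 := fun n => by
    simpa [hcdef, Complex.norm_real] using abs_genBinom_le α hα0 hα1 n
  have hu : Summable u := by
    rw [← summable_nat_add_iff 1]
    have h1 : Summable (fun n : ℕ => (n : ℝ) * r ^ n) := by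
      simpa using summable_pow_mul_geometric_of_norm_lt_one 1
        (by rwa [Real.norm_eq_abs, abs_of_pos hr0])
    have h2 : Summable (fun n : ℕ => r ^ n) := summable_geometric_of_lt_one hr0.le hr1
    have := h1.add h2
    refine this.congr fun n => ?_
    simp [hudef]
    push_cast
    ring
  have hg : ∀ n w, HasDerivAt (g n) (g' n w) w := fun n w =>
    (hasDerivAt_pow n w).const_mul (c n)
  have hg' : ∀ n w, w ∈ t → ‖g' n w‖ ≤ u n := by
    intro n w hw
    have hwr : ‖w‖ ≤ r := (hmemnorm w hw).le
    calc ‖g' n w‖ = ‖c n‖ * ((n : ℝ) * ‖w‖ ^ (n - 1)) := by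
          simp [hg'def, norm_mul, norm_pow]
      _ ≤ 1 * ((n : ℝ) * r ^ (n - 1)) := by
          refine mul_le_mul (hcle n) ?_ (by positivity) zero_le_one
          exact mul_le_mul_of_nonneg_left (pow_le_pow_left₀ (norm_nonneg _) hwr _) (Nat.cast_nonneg n)
      _ = u n := by simp [hudef]
  have hg0 : Summable fun n => g n 0 := by
    refine (hasSum_single 0 fun n hn => ?_).summable
    simp [hgdef, zero_pow hn]
  have hFs : ∀ w ∈ t, Summable fun n => g n w := fun w hw =>
    summable_of_summable_hasDerivAt_of_isPreconnected hu hto htc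
      (fun n y _ => hg n y) hg' h0t hg0 hw
  set F : ℂ → ℂ := fun w => ∑' n, g n w with hFdef
  set D : ℂ → ℂ := fun w => ∑' n, g' n w with hDdef
  have hDsum : ∀ w ∈ t, HasSum (fun n => g' n w) (D w) := fun w hw =>
    (Summable.of_norm_bounded hu fun n => hg' n w hw).hasSum
  have hF' : ∀ w ∈ t, HasDerivAt F (D w) w := fun w hw =>
    hasDerivAt_tsum_of_isPreconnected hu hto htc (fun n y _ => hg n y) hg' h0t hg0 hw
  -- the ODE
  have key : ∀ w ∈ t, (1 + w) * D w = (α : ℂ) * F w := by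
    intro w hw
    have hF : HasSum (fun n => c n * w ^ n) (F w) := (hFs w hw).hasSum
    have hD : HasSum (fun n => c n * ((n : ℂ) * w ^ (n - 1))) (D w) := hDsum w hw
    have hshift : HasSum (fun n => c (n + 1) * (((n : ℂ) + 1) * w ^ n)) (D w) := by
      have := (hasSum_nat_add_iff' (f := fun n => c n * ((n : ℂ) * w ^ (n - 1))) 1).2 hD
      simpa using this
    have hfun : (fun n : ℕ => c (n + 1) * (((n : ℂ) + 1) * w ^ n))
        = fun n : ℕ => ((α : ℂ) - n) * (c n * w ^ n) := by
      funext n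
      have hrec : ((genBinom α (n + 1) : ℝ) : ℂ) * ((n : ℂ) + 1)
          = ((genBinom α n : ℝ) : ℂ) * ((α : ℂ) - (n : ℂ)) := by
        exact_mod_cast congrArg Complex.ofReal (genBinom_succ α n)
      simp only [hcdef]
      linear_combination w ^ n * hrec
    rw [hfun] at hshift
    have hB : HasSum (fun n => (α : ℂ) * (c n * w ^ n)) ((α : ℂ) * F w) := hF.mul_left _
    have hC := hB.sub hshift
    have hfun2 : (fun n : ℕ => (α : ℂ) * (c n * w ^ n) - ((α : ℂ) - n) * (c n * w ^ n))
        = fun n : ℕ => (n : ℂ) * (c n * w ^ n) := by funext n; ring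
    rw [hfun2] at hC
    have hE := hD.mul_right w
    have hfun3 : (fun n : ℕ => c n * ((n : ℂ) * w ^ (n - 1)) * w)
        = fun n : ℕ => (n : ℂ) * (c n * w ^ n) := by
      funext n
      cases n with
      | zero => simp
      | succ m => simp only [Nat.add_sub_cancel, pow_succ]; push_cast; ring
    rw [hfun3] at hE
    have := hE.unique hC
    linear_combination this
  -- the quotient is constant
  set h : ℂ → ℂ := fun w => F w * (1 + w) ^ (-(α : ℂ)) with hhdef
  have hslit : ∀ w ∈ t, (1 + w) ∈ Complex.slitPlane := by
    intro w hw
    refine Or.inl ?_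
    have : |w.re| ≤ ‖w‖ := Complex.abs_re_le_norm w
    have := hmemnorm w hw
    simp only [Complex.add_re, Complex.one_re]
    have : |w.re| < 1 := lt_of_le_of_lt (Complex.abs_re_le_norm w) (lt_trans (hmemnorm w hw) hr1)
    cases abs_lt.mp this with
    | intro h1 h2 => linarith
  have hne : ∀ w ∈ t, (1 + w) ≠ 0 := fun w hw =>
    Complex.slitPlane_ne_zero (hslit w hw)
  have hderiv : ∀ w ∈ t, HasDerivAt h 0 w := by
    intro w hw
    have hcp : HasDerivAt (fun y : ℂ => (1 + y) ^ (-(α : ℂ)))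
        ((-(α : ℂ)) * (1 + w) ^ (-(α : ℂ) - 1) * 1) w :=
      HasDerivAt.cpow_const ((hasDerivAt_id w).const_add 1) (hslit w hw)
    have := (hF' w hw).mul hcp
    refine this.congr_deriv (Eq.symm ?_)
    have hsplit : (1 + w) ^ (-(α : ℂ)) = (1 + w) ^ (-(α : ℂ) - 1) * (1 + w) := by
      have e := Complex.cpow_add (x := 1 + w) (-(α : ℂ) - 1) 1 (hne w hw)
      have e2 : (-(α : ℂ) - 1) + 1 = -(α : ℂ) := by ring
      rw [e2, Complex.cpow_one] at e
      exact e
    rw [hsplit]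
    have := key w hw
    linear_combination (-((1 + w) ^ (-(α : ℂ) - 1))) * this
  have hdiff : DifferentiableOn ℂ h t := fun w hw =>
    ((hderiv w hw).differentiableAt).differentiableWithinAt
  have hfd0 : ∀ w ∈ t, fderivWithin ℂ h t w = 0 := by
    intro w hw
    have h1 : HasFDerivAt h (0 : ℂ →L[ℂ] ℂ) w := by
      have h2 := (hderiv w hw).hasFDerivAt
      rwa [show ContinuousLinearMap.toSpanSingleton ℂ (0 : ℂ) = 0 by ext; simp] at h2
    rw [(h1.hasFDerivWithinAt).fderivWithin (hto.uniqueDiffWithinAt hw)]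
  have hconst : ∀ w ∈ t, h w = h 0 := fun w hw =>
    (convex_ball (0:ℂ) r).is_const_of_fderivWithin_eq_zero hdiff hfd0 hw h0t
  have hF0 : F 0 = 1 := by
    have h1 : HasSum (fun n => g n 0) (g 0 0) :=
      hasSum_single 0 fun n hn => by simp [hgdef, zero_pow hn]
    have : g 0 0 = 1 := by simp [hgdef, hcdef, genBinom_zero]
    exact ((hFs 0 h0t).hasSum.unique (this ▸ h1))
  have hh0 : h 0 = 1 := by
    simp [hhdef, hF0, Complex.one_cpow]
  -- conclude F z = (1+z)^α
  have hFz : F z = (1 + z) ^ (α : ℂ) := by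
    have h1 : F z * (1 + z) ^ (-(α : ℂ)) = 1 := by
      have := hconst z hzt
      rw [hh0] at this
      exact this
    have h2 : (1 + z) ^ (-(α : ℂ)) * (1 + z) ^ (α : ℂ) = 1 := by
      rw [← Complex.cpow_add _ _ (hne z hzt)]
      simp
    calc F z = F z * ((1 + z) ^ (-(α : ℂ)) * (1 + z) ^ (α : ℂ)) := by rw [h2, mul_one]
      _ = (F z * (1 + z) ^ (-(α : ℂ))) * (1 + z) ^ (α : ℂ) := by ring
      _ = (1 + z) ^ (α : ℂ) := by rw [h1, one_mul]
  have hs := (hFs z hzt).hasSum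
  have hFzeq : F z = ∑' n, g n z := rfl
  rw [← hFzeq, hFz] at hs
  exact hs

lemma inner_sum_eq (x : ℂ) (m : ℕ) (hm : m ≠ 0) :
    ∑ l ∈ Finset.Icc 1 m, (m.choose l : ℂ) * (-1 : ℂ) ^ (l + 1) * (x ^ l - 1)
      = -(1 - x) ^ m := by
  have hset : Finset.Icc 1 m = (Finset.range (m + 1)).erase 0 := by
    ext l
    simp only [Finset.mem_Icc, Finset.mem_erase, Finset.mem_range, Nat.lt_succ_iff]
    omega
  rw [hset, Finset.sum_erase _ (by simp)]
  have e1 : (1 - x) ^ m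
      = ∑ l ∈ Finset.range (m + 1), (-x) ^ l * 1 ^ (m - l) * (m.choose l : ℂ) := by
    rw [← add_pow]; ring_nf
  have e2 : (0 : ℂ)
      = ∑ l ∈ Finset.range (m + 1), (-1 : ℂ) ^ l * 1 ^ (m - l) * (m.choose l : ℂ) := by
    rw [← add_pow]; simp [zero_pow hm]
  have key : ∀ l : ℕ, (m.choose l : ℂ) * (-1 : ℂ) ^ (l + 1) * (x ^ l - 1)
      = -((-x) ^ l * 1 ^ (m - l) * (m.choose l : ℂ))
        + (-1 : ℂ) ^ l * 1 ^ (m - l) * (m.choose l : ℂ) := by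
    intro l
    ring
  calc ∑ l ∈ Finset.range (m + 1), (m.choose l : ℂ) * (-1 : ℂ) ^ (l + 1) * (x ^ l - 1)
      = ∑ l ∈ Finset.range (m + 1),
          (-((-x) ^ l * 1 ^ (m - l) * (m.choose l : ℂ))
            + (-1 : ℂ) ^ l * 1 ^ (m - l) * (m.choose l : ℂ)) :=
        Finset.sum_congr rfl fun l _ => key l
    _ = -(1 - x) ^ m := by
        rw [Finset.sum_add_distrib, Finset.sum_neg_distrib, ← e1, ← e2, add_zero]

lemma ofReal_mul_cpow {r : ℝ} (hr : 0 < r) {w : ℂ} (hw : w ≠ 0) (s : ℂ) :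
    ((r : ℂ) * w) ^ s = (r : ℂ) ^ s * w ^ s := by
  have hr' : (r : ℂ) ≠ 0 := Complex.ofReal_ne_zero.mpr hr.ne'
  rw [Complex.cpow_def_of_ne_zero (mul_ne_zero hr' hw),
      Complex.cpow_def_of_ne_zero hr', Complex.cpow_def_of_ne_zero hw,
      Complex.log_ofReal_mul hr hw, add_mul, Complex.exp_add,
      Complex.ofReal_log hr.le]

/-- the Lévy-exponent identity for the tempered space-fractional Poisson
process: `Σ_{n≥1} μ^{α-n} binom(α,n) λ^n Σ_{l=1}^n C(n,l) (-1)^{l+1} (e^{iθl} - 1)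
 = -((μ + λ(1 - e^{iθ}))^α - μ^α)`. -/
theorem tsfpp_levy_exponent (α μ lam θ : ℝ) (hα : α ∈ Set.Ioo (0 : ℝ) 1) (hμ : 0 < μ)
    (hlam : 0 < lam) (hlamμ : 2 * lam < μ) :
    HasSum (fun n : ℕ =>
        ((μ ^ (α - ((n : ℝ) + 1)) * genBinom α (n + 1) * lam ^ (n + 1) : ℝ) : ℂ) *
          ∑ l ∈ Finset.Icc 1 (n + 1),
            ((n + 1).choose l : ℂ) * (-1 : ℂ) ^ (l + 1) *
              (Complex.exp (Complex.I * θ * (l : ℂ)) - 1))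
      (-((((μ : ℂ) + (lam : ℂ) * (1 - Complex.exp (Complex.I * θ))) ^ (α : ℂ)) -
          (μ : ℂ) ^ (α : ℂ))) := by
  have hμ0 : (μ : ℂ) ≠ 0 := Complex.ofReal_ne_zero.mpr hμ.ne'
  set x : ℂ := Complex.exp (Complex.I * θ) with hxdef
  have hxn : ‖x‖ = 1 := by
    rw [hxdef, Complex.norm_exp]
    simp [Complex.mul_re]
  have h1x : ‖(1 : ℂ) - x‖ ≤ 2 := by
    calc ‖(1 : ℂ) - x‖ ≤ ‖(1 : ℂ)‖ + ‖x‖ := norm_sub_le _ _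
      _ = 2 := by rw [hxn, norm_one]; norm_num
  set z : ℂ := ((lam / μ : ℝ) : ℂ) * (1 - x) with hzdef
  have hznorm : ‖z‖ < 1 := by
    have h1 : ‖z‖ = (lam / μ) * ‖(1 : ℂ) - x‖ := by
      rw [hzdef, norm_mul, Complex.norm_real, Real.norm_eq_abs,
        abs_of_pos (div_pos hlam hμ)]
    have h2 : (lam / μ) * ‖(1:ℂ) - x‖ ≤ (lam / μ) * 2 :=
      mul_le_mul_of_nonneg_left h1x (div_pos hlam hμ).le
    have h3 : (lam / μ) * 2 < 1 := by
      rw [div_mul_eq_mul_div, div_lt_one hμ]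
      linarith
    linarith [h1 ▸ h2]
  have h1z : (1 : ℂ) + z ≠ 0 := by
    intro h
    have : z = -1 := by linear_combination h
    rw [this] at hznorm
    simp at hznorm
  have hbs := hasSum_genBinom α hα.1.le hα.2.le hznorm
  have h1 := (hasSum_nat_add_iff'
    (f := fun n : ℕ => ((genBinom α n : ℝ) : ℂ) * z ^ n) 1).2 hbs
  simp only [Finset.range_one, Finset.sum_singleton, pow_zero, mul_one,
    genBinom_zero, Complex.ofReal_one] at h1
  have h2 := h1.mul_left (-(((μ ^ α : ℝ)) : ℂ))
  have hfun : (fun n : ℕ =>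
      ((μ ^ (α - ((n : ℝ) + 1)) * genBinom α (n + 1) * lam ^ (n + 1) : ℝ) : ℂ) *
        ∑ l ∈ Finset.Icc 1 (n + 1),
          ((n + 1).choose l : ℂ) * (-1 : ℂ) ^ (l + 1) *
            (Complex.exp (Complex.I * θ * (l : ℂ)) - 1))
      = fun n : ℕ => -(((μ ^ α : ℝ)) : ℂ) * (((genBinom α (n + 1) : ℝ) : ℂ) * z ^ (n + 1)) := by
    funext n
    have hexp : ∀ l : ℕ, Complex.exp (Complex.I * θ * (l : ℂ)) = x ^ l := by
      intro l
      rw [show Complex.I * (θ : ℂ) * (l : ℂ) = (l : ℕ) * (Complex.I * θ) by push_cast; ring,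
        Complex.exp_nat_mul]
    have hsum : ∑ l ∈ Finset.Icc 1 (n + 1),
        ((n + 1).choose l : ℂ) * (-1 : ℂ) ^ (l + 1) *
          (Complex.exp (Complex.I * θ * (l : ℂ)) - 1) = -(1 - x) ^ (n + 1) := by
      rw [← inner_sum_eq x (n + 1) (Nat.succ_ne_zero n)]
      exact Finset.sum_congr rfl fun l _ => by rw [hexp l]
    rw [hsum]
    have hc : μ ^ (α - ((n : ℝ) + 1)) = μ ^ α / μ ^ (n + 1) := by
      rw [Real.rpow_sub hμ]
      congr 1
      rw [show ((n : ℝ) + 1) = ((n + 1 : ℕ) : ℝ) by push_cast; ring, Real.rpow_natCast]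
    rw [hc, hzdef, mul_pow]
    push_cast
    rw [div_pow]
    have hμn : ((μ : ℂ)) ^ (n + 1) ≠ 0 := pow_ne_zero _ hμ0
    field_simp
  rw [hfun]
  have hval : -((((μ : ℂ) + (lam : ℂ) * (1 - x)) ^ (α : ℂ)) - (μ : ℂ) ^ (α : ℂ))
      = -(((μ ^ α : ℝ)) : ℂ) * ((1 + z) ^ (α : ℂ) - 1) := by
    have hfact : (μ : ℂ) + (lam : ℂ) * (1 - x) = (μ : ℂ) * (1 + z) := by
      rw [hzdef]
      push_cast
      field_simp
    rw [hfact, ofReal_mul_cpow hμ h1z, Complex.ofReal_cpow hμ.le]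
    ring
  rw [hval]
  exact h2
end

section
/- Fix an integer k ≥ 1 and reals λ > 0, t > 0. For every real s, the series Σ_{n=0}^{∞} s^{n} · p_n^{λ}(t) converges absolutely and equals exp(−λt( k − Σ_{j=1}^{k} s^{j} )). -/
/-- Probability mass function of the Poisson process of order `k` with rate `lam` at
time `t`: `p_n(t) = Σ_{(x₁,…,x_k) ∈ Ω(k,n)} e^{-kλt} (λt)^{x₁+⋯+x_k} / (x₁!⋯x_k!)`,
where `Ω(k,n)` is the set of `k`-tuples of nonnegative integers with
`x₁ + 2x₂ + ⋯ + k x_k = n`. -/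
noncomputable def ppokPMF (k : ℕ) (lam t : ℝ) (n : ℕ) : ℝ :=
  ∑ x ∈ (Fintype.piFinset fun _ : Fin k => Finset.range (n + 1)).filter
      (fun x => ∑ i : Fin k, ((i : ℕ) + 1) * x i = n),
    Real.exp (-(k * lam * t)) * (lam * t) ^ (∑ i : Fin k, x i) /
      ∏ i : Fin k, ((x i).factorial : ℝ)

set_option maxHeartbeats 1000000

open Finset in
lemma pi_hasSum (k : ℕ) (g : Fin k → ℕ → ℝ) (h : ∀ i, Summable fun m => |g i m|) :
    Summable (fun x : Fin k → ℕ => |∏ i, g i (x i)|) ∧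
    HasSum (fun x : Fin k → ℕ => ∏ i, g i (x i)) (∏ i, ∑' m, g i m) := by
  induction k with
  | zero =>
      constructor
      · simp only [Finset.univ_eq_empty, Finset.prod_empty, abs_one]
        exact Summable.of_finite
      · simpa using (hasSum_fintype (fun x : Fin 0 → ℕ => ∏ i : Fin 0, g i (x i)))
  | succ k ih =>
      obtain ⟨ihS, ihH⟩ := ih (fun i => g i.succ) (fun i => h i.succ)
      have h0 : Summable (g 0) := (h 0).of_abs
      set F : ℕ × (Fin k → ℕ) → ℝ := fun p => g 0 p.1 * ∏ i : Fin k, g i.succ (p.2 i) with hFdef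
      have hFabs : Summable fun p : ℕ × (Fin k → ℕ) => |F p| := by
        have := ((h 0).mul_of_nonneg ihS (fun _ => abs_nonneg _) (fun _ => abs_nonneg _))
        refine this.congr fun p => ?_
        simp [F, abs_mul]
      have hFsum : Summable F := hFabs.of_abs
      have hF : HasSum F ((∑' m, g 0 m) * ∏ i : Fin k, ∑' m, g i.succ m) :=
        HasSum.mul (f := g 0) (g := fun y : Fin k → ℕ => ∏ i : Fin k, g i.succ (y i))
          h0.hasSum ihH hFsum
      let e : (ℕ × (Fin k → ℕ)) ≃ (Fin (k + 1) → ℕ) := Fin.consEquiv (fun _ => ℕ)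
      have hcomp : (fun x : Fin (k+1) → ℕ => ∏ i, g i (x i)) ∘ e = F := by
        funext p
        simp [e, F, Fin.prod_univ_succ, Fin.consEquiv]
      have hcomp' : (fun x : Fin (k+1) → ℕ => |∏ i, g i (x i)|) ∘ ⇑e = fun p => |F p| :=
        funext fun p => congrArg abs (congrFun hcomp p)
      constructor
      · rw [← e.summable_iff, hcomp']
        exact hFabs
      · rw [← e.hasSum_iff, hcomp, Fin.prod_univ_succ]
        exact hF

open Finset in
/-- the probability generating function of the Poisson process of order
`k`: for every real `s`, `Σ_{n≥0} s^n p_n(t)` converges absolutely and equals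
`exp(-λt(k - Σ_{j=1}^k s^j))`. -/
theorem ppok_pgf (k : ℕ) (hk : 1 ≤ k) (lam t : ℝ) (hlam : 0 < lam) (ht : 0 < t)
    (s : ℝ) :
    Summable (fun n : ℕ => |s ^ n * ppokPMF k lam t n|) ∧
    HasSum (fun n : ℕ => s ^ n * ppokPMF k lam t n)
      (Real.exp (-(lam * t * (k - ∑ j ∈ Finset.Icc 1 k, s ^ j)))) := by
  classical
  set a : Fin k → ℝ := fun i => lam * t * s ^ ((i : ℕ) + 1) with ha
  set g : Fin k → ℕ → ℝ := fun i m => a i ^ m / m.factorial with hg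
  have hgi : ∀ i, Summable fun m => |g i m| := by
    intro i
    exact (NormedSpace.norm_expSeries_div_summable (a i)).congr fun m => Real.norm_eq_abs _
  obtain ⟨hS, hH⟩ := pi_hasSum k g hgi
  set c : ℝ := Real.exp (-(k * lam * t)) with hc
  set f : (Fin k → ℕ) → ℝ := fun x => c * ∏ i, g i (x i) with hf
  have hHf : HasSum f (c * ∏ i, ∑' m, g i m) := hH.mul_left c
  have hSabs : Summable fun x => |f x| := by
    refine (hS.mul_left c).congr fun x => ?_
    simp [hf, abs_mul, abs_of_pos (Real.exp_pos _), hc]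
  set w : (Fin k → ℕ) → ℕ := fun x => ∑ i : Fin k, ((i : ℕ) + 1) * x i with hw
  set T : ℕ → Finset (Fin k → ℕ) := fun n =>
    (Fintype.piFinset fun _ : Fin k => Finset.range (n + 1)).filter
      (fun x => ∑ i : Fin k, ((i : ℕ) + 1) * x i = n) with hT
  have hset : ∀ n, w ⁻¹' {n} = ↑(T n) := by
    intro n
    ext x
    simp only [hT, Set.mem_preimage, Set.mem_singleton_iff, coe_filter, Set.mem_setOf_eq,
      Fintype.mem_piFinset, mem_range, Nat.lt_succ_iff, hw]
    refine ⟨fun hx => ⟨fun i => ?_, hx⟩, fun h => h.2⟩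
    calc x i ≤ ((i : ℕ) + 1) * x i := Nat.le_mul_of_pos_left _ (Nat.succ_pos _)
      _ ≤ ∑ i : Fin k, ((i : ℕ) + 1) * x i :=
          Finset.single_le_sum (f := fun i : Fin k => ((i : ℕ) + 1) * x i)
            (fun j _ => Nat.zero_le _) (mem_univ i)
      _ = n := hx
  have hpoint : ∀ n, s ^ n * ppokPMF k lam t n = ∑ x ∈ T n, f x := by
    intro n
    rw [ppokPMF, Finset.mul_sum]
    refine Finset.sum_congr rfl fun x hx => ?_
    have hxw : ∑ i : Fin k, ((i : ℕ) + 1) * x i = n := (Finset.mem_filter.mp hx).2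
    have hprod : ∏ i : Fin k, a i ^ x i = (lam * t) ^ (∑ i, x i) * s ^ n := by
      rw [← hxw, ← Finset.prod_pow_eq_pow_sum, ← Finset.prod_pow_eq_pow_sum,
        ← Finset.prod_mul_distrib]
      refine Finset.prod_congr rfl fun i _ => ?_
      rw [ha, mul_pow, pow_mul]
    have : ∏ i, g i (x i) = (∏ i : Fin k, a i ^ x i) / ∏ i : Fin k, ((x i).factorial : ℝ) := by
      rw [← Finset.prod_div_distrib]
    simp only [hf, hc]
    rw [this, hprod]
    ring
  have hfib_eq : ∀ n, (∑' x : ↥(w ⁻¹' {n}), f x) = s ^ n * ppokPMF k lam t n := by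
    intro n
    rw [hset n, Finset.tsum_subtype', ← hpoint]
  have htotal : c * ∏ i, ∑' m, g i m
      = Real.exp (-(lam * t * (k - ∑ j ∈ Finset.Icc 1 k, s ^ j))) := by
    have htsum : ∀ i : Fin k, ∑' m, g i m = Real.exp (a i) := by
      intro i
      rw [Real.exp_eq_exp_ℝ]
      exact (NormedSpace.expSeries_div_hasSum_exp (a i)).tsum_eq
    rw [Finset.prod_congr rfl fun i _ => htsum i, ← Real.exp_sum, hc, ← Real.exp_add]
    congr 1
    have h1 : ∑ i : Fin k, a i = lam * t * ∑ j ∈ Finset.Icc 1 k, s ^ j := by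
      rw [← Finset.Ico_add_one_right_eq_Icc, Finset.sum_Ico_eq_sum_range]
      simp only [Nat.add_sub_cancel, ha]
      rw [Fin.sum_univ_eq_sum_range (fun i => lam * t * s ^ (i + 1)) k, Finset.mul_sum]
      exact Finset.sum_congr rfl fun i _ => by ring_nf
    rw [h1]
    ring
  constructor
  · have habsfib : HasSum (fun n => ∑' x : ↥(w ⁻¹' {n}), |f x|) (∑' x, |f x|) :=
      hSabs.hasSum.tsum_fiberwise w
    refine Summable.of_nonneg_of_le (fun n => abs_nonneg _) (fun n => ?_) habsfib.summable
    rw [← hfib_eq n, hset n, Finset.tsum_subtype']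
    calc |∑ x ∈ T n, f x| ≤ ∑ x ∈ T n, |f x| := Finset.abs_sum_le_sum_abs _ _
      _ = ∑' x : ((T n : Set (Fin k → ℕ))), |f ↑x| :=
          (Finset.tsum_subtype' (T n) fun y => |f y|).symm
  · have := hHf.tsum_fiberwise w
    rw [htotal] at this
    exact (funext hfib_eq : (fun n => ∑' x : ↥(w ⁻¹' {n}), f x) = _) ▸ this
end
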